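/- Type B₂ quantum root-vector relations (used in the paper's proof of Lemma 11.4(2), change of words (ijij) ↔ (jiji) with i short and j long): suppose E_i, E_j ∈ A satisfy the type-B₂ quantum Serre relations E_i³·E_j − [3]_{q_s}·E_i²·E_j·E_i + [3]_{q_s}·E_i·E_j·E_i² − E_j·E_i³ = 0 and E_j²·E_i − (q + q⁻¹)·E_j·E_i·E_j + E_i·E_j² = 0, where [3]_{q_s} := q_s² + 1 + q_s⁻². Define the non-simple quantum root vectors E_Y := (q_s·E_j·E_i − q_s⁻¹·E_i·E_j)/(q − q⁻¹) and E_X := (E_Y·E_i − E_i·E_Y)/(q_s − q_s⁻¹). Then: E_Y·E_X = q·E_X·E_Y; E_X·E_i = q·E_i·E_X; E_j·E_Y = q·E_Y·E_j; and E_j·E_X − E_X·E_j = (q − q⁻¹)·E_Y². -/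

import Mathlib

set_option maxHeartbeats 4000000 in
/-- type B₂ quantum root-vector relations, `E_i` short, `E_j` long,
`q = q_s²`: under the type-B₂ quantum Serre relations, the non-simple quantum root
vectors `E_Y := (q_s·E_j·E_i − q_s⁻¹·E_i·E_j)/(q − q⁻¹)` and
`E_X := (E_Y·E_i − E_i·E_Y)/(q_s − q_s⁻¹)` satisfy
`E_Y·E_X = q·E_X·E_Y`, `E_X·E_i = q·E_i·E_X`, `E_j·E_Y = q·E_Y·E_j` and
`E_j·E_X − E_X·E_j = (q − q⁻¹)·E_Y²`. -/
theorem typeB2_root_vector_relations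
    {𝕜 : Type*} [Field 𝕜] (qs : 𝕜) (hqs0 : qs ≠ 0) (hqs : ∀ n : ℕ, 1 ≤ n → qs ^ n ≠ 1)
    (q : 𝕜) (hq : q = qs ^ 2)
    {A : Type*} [Ring A] [Algebra 𝕜 A]
    (Ei Ej EY EX : A)
    (hSerre1 : Ei ^ 3 * Ej - (qs ^ 2 + 1 + qs⁻¹ ^ 2) • (Ei ^ 2 * Ej * Ei)
        + (qs ^ 2 + 1 + qs⁻¹ ^ 2) • (Ei * Ej * Ei ^ 2) - Ej * Ei ^ 3 = 0)
    (hSerre2 : Ej ^ 2 * Ei - (q + q⁻¹) • (Ej * Ei * Ej) + Ei * Ej ^ 2 = 0)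
    (hEY : EY = (q - q⁻¹)⁻¹ • (qs • (Ej * Ei) - qs⁻¹ • (Ei * Ej)))
    (hEX : EX = (qs - qs⁻¹)⁻¹ • (EY * Ei - Ei * EY)) :
    EY * EX = q • (EX * EY) ∧ EX * Ei = q • (Ei * EX) ∧ Ej * EY = q • (EY * Ej) ∧
      Ej * EX - EX * Ej = (q - q⁻¹) • EY ^ 2 := by
  subst hq
  have hb : qs - qs⁻¹ ≠ 0 := by
    intro h
    apply hqs 2 (by norm_num)
    have h2 : qs * (qs - qs⁻¹) = qs ^ 2 - 1 := by field_simp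
    rw [h, mul_zero] at h2
    exact (sub_eq_zero.mp h2.symm)
  have ha : qs ^ 2 - (qs ^ 2)⁻¹ ≠ 0 := by
    intro h
    apply hqs 4 (by norm_num)
    have h2 : qs ^ 2 * (qs ^ 2 - (qs ^ 2)⁻¹) = qs ^ 4 - 1 := by field_simp
    rw [h, mul_zero] at h2
    exact (sub_eq_zero.mp h2.symm)
  have hab : (qs ^ 2 - (qs ^ 2)⁻¹) * (qs - qs⁻¹) ≠ 0 := mul_ne_zero ha hb
  have haab : (qs ^ 2 - (qs ^ 2)⁻¹) * ((qs ^ 2 - (qs ^ 2)⁻¹) * (qs - qs⁻¹)) ≠ 0 :=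
    mul_ne_zero ha hab
  have hcan : ∀ (c : 𝕜), c ≠ 0 → ∀ x y : A, c • (x - y) = 0 → x = y := by
    intro c hc x y h
    rcases smul_eq_zero.mp h with h | h
    · exact absurd h hc
    · exact sub_eq_zero.mp h
  have hY : (qs ^ 2 - (qs ^ 2)⁻¹) • EY = qs • (Ej * Ei) - qs⁻¹ • (Ei * Ej) := by
    rw [hEY, smul_smul, mul_inv_cancel₀ ha, one_smul]
  have hX : (qs - qs⁻¹) • EX = EY * Ei - Ei * EY := by
    rw [hEX, smul_smul, mul_inv_cancel₀ hb, one_smul]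
  have hX2 : ((qs ^ 2 - (qs ^ 2)⁻¹) * (qs - qs⁻¹)) • EX
      = qs • (Ej * (Ei * Ei)) - (qs + qs⁻¹) • (Ei * (Ej * Ei)) + qs⁻¹ • (Ei * (Ei * Ej)) := by
    rw [mul_smul, hX, smul_sub, ← smul_mul_assoc, ← mul_smul_comm, hY]
    simp only [sub_mul, mul_sub, smul_mul_assoc, mul_smul_comm, smul_smul, smul_sub, mul_assoc]
    match_scalars <;> field_simp <;> ring
  -- claim 2 : EX * Ei = q • (Ei * EX)
  have K2 : ((qs ^ 2 - (qs ^ 2)⁻¹) * (qs - qs⁻¹)) • (EX * Ei - qs ^ 2 • (Ei * EX))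
      = (-qs) • (Ei ^ 3 * Ej - (qs ^ 2 + 1 + qs⁻¹ ^ 2) • (Ei ^ 2 * Ej * Ei)
          + (qs ^ 2 + 1 + qs⁻¹ ^ 2) • (Ei * Ej * Ei ^ 2) - Ej * Ei ^ 3) := by
    have conv : ((qs ^ 2 - (qs ^ 2)⁻¹) * (qs - qs⁻¹)) • (EX * Ei - qs ^ 2 • (Ei * EX))
        = (((qs ^ 2 - (qs ^ 2)⁻¹) * (qs - qs⁻¹)) • EX) * Ei
          - qs ^ 2 • (Ei * (((qs ^ 2 - (qs ^ 2)⁻¹) * (qs - qs⁻¹)) • EX)) := by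
      simp only [smul_sub, smul_mul_assoc, mul_smul_comm, smul_smul]
      match_scalars <;> ring
    rw [conv, hX2]
    simp only [sub_mul, mul_sub, add_mul, mul_add, smul_mul_assoc, mul_smul_comm, smul_smul,
      smul_sub, smul_add, mul_assoc, pow_succ, pow_zero, one_mul]
    match_scalars <;> field_simp <;> ring
  have H2 : EX * Ei = qs ^ 2 • (Ei * EX) := by
    apply hcan _ hab
    rw [K2, hSerre1, smul_zero]
  -- claim 3 : Ej * EY = q • (EY * Ej)
  have K3 : (qs ^ 2 - (qs ^ 2)⁻¹) • (Ej * EY - qs ^ 2 • (EY * Ej))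
      = qs • (Ej ^ 2 * Ei - (qs ^ 2 + (qs ^ 2)⁻¹) • (Ej * Ei * Ej) + Ei * Ej ^ 2) := by
    have conv : (qs ^ 2 - (qs ^ 2)⁻¹) • (Ej * EY - qs ^ 2 • (EY * Ej))
        = Ej * ((qs ^ 2 - (qs ^ 2)⁻¹) • EY) - qs ^ 2 • (((qs ^ 2 - (qs ^ 2)⁻¹) • EY) * Ej) := by
      simp only [smul_sub, smul_mul_assoc, mul_smul_comm, smul_smul]
      match_scalars <;> ring
    rw [conv, hY]
    simp only [sub_mul, mul_sub, add_mul, mul_add, smul_mul_assoc, mul_smul_comm, smul_smul,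
      smul_sub, smul_add, mul_assoc, pow_succ, pow_zero, one_mul]
    match_scalars <;> field_simp <;> ring
  have H3 : Ej * EY = qs ^ 2 • (EY * Ej) := by
    apply hcan _ ha
    rw [K3, hSerre2, smul_zero]
  -- claim 4 : Ej * EX - EX * Ej = (q - q⁻¹) • EY ^ 2
  have K4 : ((qs ^ 2 - (qs ^ 2)⁻¹) * (qs - qs⁻¹)) •
        ((Ej * EX - EX * Ej) - (qs ^ 2 - (qs ^ 2)⁻¹) • EY ^ 2)
      = qs • ((Ej ^ 2 * Ei - (qs ^ 2 + (qs ^ 2)⁻¹) • (Ej * Ei * Ej) + Ei * Ej ^ 2) * Ei)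
        - qs⁻¹ • (Ei * (Ej ^ 2 * Ei - (qs ^ 2 + (qs ^ 2)⁻¹) • (Ej * Ei * Ej) + Ei * Ej ^ 2)) := by
    have conv : ((qs ^ 2 - (qs ^ 2)⁻¹) * (qs - qs⁻¹)) •
          ((Ej * EX - EX * Ej) - (qs ^ 2 - (qs ^ 2)⁻¹) • EY ^ 2)
        = Ej * (((qs ^ 2 - (qs ^ 2)⁻¹) * (qs - qs⁻¹)) • EX)
          - (((qs ^ 2 - (qs ^ 2)⁻¹) * (qs - qs⁻¹)) • EX) * Ej
          - (qs - qs⁻¹) • (((qs ^ 2 - (qs ^ 2)⁻¹) • EY) * ((qs ^ 2 - (qs ^ 2)⁻¹) • EY)) := by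
      simp only [smul_sub, smul_mul_assoc, mul_smul_comm, smul_smul, pow_two]
      match_scalars <;> ring
    rw [conv, hY, hX2]
    simp only [sub_mul, mul_sub, add_mul, mul_add, smul_mul_assoc, mul_smul_comm, smul_smul,
      smul_sub, smul_add, mul_assoc, pow_succ, pow_zero, one_mul]
    match_scalars <;> field_simp <;> ring
  have H4 : Ej * EX - EX * Ej = (qs ^ 2 - (qs ^ 2)⁻¹) • EY ^ 2 := by
    apply hcan _ hab
    rw [K4, hSerre2]
    simp
  -- claim 1 : EY * EX = q • (EX * EY)
  have K1 : ((qs ^ 2 - (qs ^ 2)⁻¹) * ((qs ^ 2 - (qs ^ 2)⁻¹) * (qs - qs⁻¹))) •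
        (EY * EX - qs ^ 2 • (EX * EY))
      = (-1 : 𝕜) • ((Ei ^ 3 * Ej - (qs ^ 2 + 1 + qs⁻¹ ^ 2) • (Ei ^ 2 * Ej * Ei)
            + (qs ^ 2 + 1 + qs⁻¹ ^ 2) • (Ei * Ej * Ei ^ 2) - Ej * Ei ^ 3) * Ej)
        + qs ^ 2 • (Ej * (Ei ^ 3 * Ej - (qs ^ 2 + 1 + qs⁻¹ ^ 2) • (Ei ^ 2 * Ej * Ei)
            + (qs ^ 2 + 1 + qs⁻¹ ^ 2) • (Ei * Ej * Ei ^ 2) - Ej * Ei ^ 3))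
        + qs ^ 2 • ((Ej ^ 2 * Ei - (qs ^ 2 + (qs ^ 2)⁻¹) • (Ej * Ei * Ej) + Ei * Ej ^ 2) * (Ei * Ei))
        - (1 + qs ^ 2) • (Ei * ((Ej ^ 2 * Ei - (qs ^ 2 + (qs ^ 2)⁻¹) • (Ej * Ei * Ej) + Ei * Ej ^ 2) * Ei))
        + Ei * (Ei * (Ej ^ 2 * Ei - (qs ^ 2 + (qs ^ 2)⁻¹) • (Ej * Ei * Ej) + Ei * Ej ^ 2)) := by
    have conv : ((qs ^ 2 - (qs ^ 2)⁻¹) * ((qs ^ 2 - (qs ^ 2)⁻¹) * (qs - qs⁻¹))) •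
          (EY * EX - qs ^ 2 • (EX * EY))
        = ((qs ^ 2 - (qs ^ 2)⁻¹) • EY) * (((qs ^ 2 - (qs ^ 2)⁻¹) * (qs - qs⁻¹)) • EX)
          - qs ^ 2 • ((((qs ^ 2 - (qs ^ 2)⁻¹) * (qs - qs⁻¹)) • EX) * ((qs ^ 2 - (qs ^ 2)⁻¹) • EY)) := by
      simp only [smul_sub, smul_mul_assoc, mul_smul_comm, smul_smul]
      match_scalars <;> ring
    rw [conv, hY, hX2]
    simp only [sub_mul, mul_sub, add_mul, mul_add, smul_mul_assoc, mul_smul_comm, smul_smul,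
      smul_sub, smul_add, mul_assoc, pow_succ, pow_zero, one_mul]
    match_scalars <;> field_simp <;> ring
  have H1 : EY * EX = qs ^ 2 • (EX * EY) := by
    apply hcan _ haab
    rw [K1, hSerre1, hSerre2]
    simp
  exact ⟨H1, H2, H3, H4⟩
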